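/- Chebyshev formula for iterated Pitman transforms: let V be a finite-dimensional real vector space with dual V∨, T > 0, and let α, β ∈ V and α∨, β∨ ∈ V∨ satisfy α∨(α) = β∨(β) = 2 and α∨(β) = β∨(α) = −2ρ with ρ > 0. Let n ≥ 1 be an integer with ρ ≥ cos(π/n). Then for every continuous path π : [0,T] → V with π(0) = 0 and every t ∈ [0,T]: (P_α P_β P_α ⋯ π)(t) (n alternating factors, the rightmost applied first) equals π(t) − [ inf over t ≥ s_0 ≥ s_1 ≥ ⋯ ≥ s_{n−1} ≥ 0 of Σ_{i=0}^{n−1} U_i(ρ) Z^{(i)}(s_i) ] · α − [ inf over t ≥ s_0 ≥ s_1 ≥ ⋯ ≥ s_{n−2} ≥ 0 of Σ_{i=0}^{n−2} U_i(ρ) Z^{(i+1)}(s_i) ] · β, where X(s) = α∨(π(s)), Y(s) = β∨(π(s)), Z^{(k)} = X for k even and Z^{(k)} = Y for k odd (for n = 1 the β-term, an infimum over an empty family of indices, is omitted). -/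

import Mathlib

/-- The Pitman transform associated with a pair `(α, α∨)`:
`P_α π (t) = π t − (inf_{0 ≤ s ≤ t} α∨(π s)) • α`. -/
noncomputable def pitman {V : Type*} [AddCommGroup V] [Module ℝ V]
    (α : V) (αv : Module.Dual ℝ V) (π : ℝ → V) : ℝ → V :=
  fun t => π t - sInf ((fun s => αv (π s)) '' Set.Icc 0 t) • α

/-- `altComp P Q n` is the alternating composition `P ∘ Q ∘ P ∘ ⋯` with `n` factors. -/
def altComp {X : Type*} (P Q : X → X) : ℕ → (X → X)
  | 0 => id
  | n + 1 => P ∘ altComp Q P n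

namespace PitmanBBO
open Set Pointwise

/-! ### sInf helpers -/

/-- running infimum of `g` over `[0, x]`. -/
noncomputable def rinf (g : ℝ → ℝ) (x : ℝ) : ℝ := sInf (g '' Set.Icc 0 x)

lemma bddBelow_of_forall {g : ℝ → ℝ} {a b C : ℝ} (h : ∀ u ∈ Icc a b, C ≤ g u) :
    BddBelow (g '' Icc a b) := ⟨C, by rintro y ⟨u, hu, rfl⟩; exact h u hu⟩

lemma lb_of_continuousOn {g : ℝ → ℝ} {a b : ℝ} (hg : ContinuousOn g (Icc a b)) :
    ∃ C, ∀ u ∈ Icc a b, C ≤ g u := by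
  obtain ⟨C, hC⟩ := (isCompact_Icc.bddBelow_image hg)
  exact ⟨C, fun u hu => hC (mem_image_of_mem _ hu)⟩

lemma sInf_image_le {g : ℝ → ℝ} {a b v : ℝ} (hB : BddBelow (g '' Icc a b))
    (hv : v ∈ Icc a b) : sInf (g '' Icc a b) ≤ g v :=
  csInf_le hB (mem_image_of_mem _ hv)

lemma le_sInf_image {g : ℝ → ℝ} {a b C : ℝ} (hab : a ≤ b)
    (h : ∀ v ∈ Icc a b, C ≤ g v) : C ≤ sInf (g '' Icc a b) :=
  le_csInf ((nonempty_Icc.2 hab).image _) (by rintro y ⟨u, hu, rfl⟩; exact h u hu)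

lemma sInf_image_add_const {g : ℝ → ℝ} {a b c C : ℝ} (hab : a ≤ b)
    (h : ∀ v ∈ Icc a b, C ≤ g v) :
    sInf ((fun u => c + g u) '' Icc a b) = c + sInf (g '' Icc a b) := by
  apply le_antisymm
  · have h1 : sInf ((fun u => c + g u) '' Icc a b) - c ≤ sInf (g '' Icc a b) := by
      apply le_csInf ((nonempty_Icc.2 hab).image _)
      rintro y ⟨u, hu, rfl⟩
      have h3 : sInf ((fun u => c + g u) '' Icc a b) ≤ c + g u :=
        csInf_le (bddBelow_of_forall (C := c + C) (fun v hv => by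
          have := h v hv; linarith)) ⟨u, hu, rfl⟩
      linarith
    linarith
  · apply le_csInf ((nonempty_Icc.2 hab).image _)
    rintro y ⟨u, hu, rfl⟩
    have := sInf_image_le (bddBelow_of_forall h) hu
    dsimp only; linarith

lemma sInf_image_const_mul {g : ℝ → ℝ} {a b c : ℝ} (hc : 0 ≤ c) :
    sInf ((fun u => c * g u) '' Icc a b) = c * sInf (g '' Icc a b) := by
  have : (fun u => c * g u) '' Icc a b = c • (g '' Icc a b) := by
    rw [← Set.image_smul, Set.image_image]; rfl
  rw [this, Real.sInf_smul_of_nonneg hc, smul_eq_mul]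

lemma rinf_le {g : ℝ → ℝ} {x v C : ℝ} (h : ∀ u ∈ Icc 0 x, C ≤ g u)
    (hv : v ∈ Icc 0 x) : rinf g x ≤ g v :=
  sInf_image_le (bddBelow_of_forall h) hv

lemma le_rinf {g : ℝ → ℝ} {x C : ℝ} (hx : 0 ≤ x) (h : ∀ v ∈ Icc 0 x, C ≤ g v) :
    C ≤ rinf g x := le_sInf_image hx h

/-- splitting of the running inf at an intermediate point. -/
lemma rinf_split {g : ℝ → ℝ} {s x C : ℝ} (h0s : 0 ≤ s) (hsx : s ≤ x)
    (h : ∀ u ∈ Icc 0 x, C ≤ g u) :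
    rinf g x = min (rinf g s) (sInf (g '' Icc s x)) := by
  have hsub1 : Icc (0:ℝ) s ⊆ Icc 0 x := Icc_subset_Icc le_rfl hsx
  have hsub2 : Icc s x ⊆ Icc 0 x := Icc_subset_Icc h0s le_rfl
  rw [rinf, ← Set.Icc_union_Icc_eq_Icc h0s hsx, Set.image_union]
  exact csInf_union (bddBelow_of_forall (fun u hu => h u (hsub1 hu)))
    ((nonempty_Icc.2 h0s).image _)
    (bddBelow_of_forall (fun u hu => h u (hsub2 hu)))
    ((nonempty_Icc.2 hsx).image _)

lemma rinf_mono {g : ℝ → ℝ} {s x C : ℝ} (h0s : 0 ≤ s) (hsx : s ≤ x)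
    (h : ∀ u ∈ Icc 0 x, C ≤ g u) : rinf g x ≤ rinf g s := by
  apply csInf_le_csInf (bddBelow_of_forall h) ((nonempty_Icc.2 h0s).image _)
  exact Set.image_mono (Icc_subset_Icc le_rfl hsx)

lemma self_le_rinf_pt {g : ℝ → ℝ} {x C : ℝ} (hx : 0 ≤ x)
    (h : ∀ u ∈ Icc 0 x, C ≤ g u) : rinf g x ≤ g x :=
  rinf_le h (right_mem_Icc.2 hx)

/-! ### The key pointwise lemma -/

/-- The crucial identity: `inf_{[s,x]} (Y - 2J) = inf_{[s,x]} Y - J s - J x` where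
`J` is the running infimum of the continuous function `Y`. -/
lemma key_pointwise {Y : ℝ → ℝ} {t s x : ℝ} (hY : ContinuousOn Y (Icc 0 t))
    (h0s : 0 ≤ s) (hsx : s ≤ x) (hxt : x ≤ t) :
    sInf ((fun σ => Y σ - 2 * rinf Y σ) '' Icc s x)
      = sInf (Y '' Icc s x) - rinf Y s - rinf Y x := by
  have hxT : (0:ℝ) ≤ t := le_trans (le_trans h0s hsx) hxt
  obtain ⟨C, hC⟩ := lb_of_continuousOn hY
  have hCx : ∀ u ∈ Icc (0:ℝ) x, C ≤ Y u := fun u hu =>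
    hC u (Icc_subset_Icc le_rfl hxt hu)
  -- facts about J on points of [s,x]
  have hJle : ∀ σ ∈ Icc s x, rinf Y σ ≤ Y σ := by
    intro σ hσ
    exact self_le_rinf_pt (le_trans h0s hσ.1)
      (fun u hu => hCx u (Icc_subset_Icc le_rfl hσ.2 hu))
  have hJmono : ∀ σ ∈ Icc s x, rinf Y σ ≤ rinf Y s := by
    intro σ hσ
    exact rinf_mono h0s hσ.1 (fun u hu => hCx u (Icc_subset_Icc le_rfl hσ.2 hu))
  have hJsplit : ∀ σ ∈ Icc s x, rinf Y σ = min (rinf Y s) (sInf (Y '' Icc s σ)) := by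
    intro σ hσ
    exact rinf_split h0s hσ.1 (fun u hu => hCx u (Icc_subset_Icc le_rfl hσ.2 hu))
  have hJx : rinf Y x = min (rinf Y s) (sInf (Y '' Icc s x)) := rinf_split h0s hsx hCx
  rcases le_or_gt (rinf Y s) (sInf (Y '' Icc s x)) with h1 | h2
  · -- no new minimum on [s,x]
    have hflat : ∀ σ ∈ Icc s x, rinf Y σ = rinf Y s := by
      intro σ hσ
      rw [hJsplit σ hσ]
      refine min_eq_left (le_trans h1 ?_)
      exact csInf_le_csInf (bddBelow_of_forall (fun u hu => hCx u
          ⟨le_trans h0s hu.1, hu.2⟩)) ((nonempty_Icc.2 hσ.1).image _)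
        (Set.image_mono (Icc_subset_Icc le_rfl hσ.2))
    have hJxx : rinf Y x = rinf Y s := hflat x ⟨hsx, le_rfl⟩
    have himg : (fun σ => Y σ - 2 * rinf Y σ) '' Icc s x
        = (fun σ => -(2 * rinf Y s) + Y σ) '' Icc s x := by
      apply Set.image_congr
      intro σ hσ; rw [hflat σ hσ]; ring
    rw [himg, sInf_image_add_const hsx (C := C)
      (fun v hv => hCx v ⟨le_trans h0s hv.1, hv.2⟩), hJxx]
    ring
  · -- a new minimum appears on [s,x]
    have hJxm : rinf Y x = sInf (Y '' Icc s x) := by rw [hJx]; exact min_eq_right h2.le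
    rw [hJxm]
    have target : sInf (Y '' Icc s x) - rinf Y s - sInf (Y '' Icc s x) = -(rinf Y s) := by ring
    rw [target]
    apply le_antisymm
    · -- find the first hitting point σ* of level J s
      obtain ⟨y, ⟨σ', hσ', rfl⟩, hy⟩ := exists_lt_of_csInf_lt
        ((nonempty_Icc.2 hsx).image _) h2
      set S : Set ℝ := {σ ∈ Icc s x | Y σ ≤ rinf Y s} with hS
      have hSne : S.Nonempty := ⟨σ', hσ', hy.le⟩
      have hSclosed : IsClosed S := by
        have : S = Icc s x ∩ Y ⁻¹' Iic (rinf Y s) := by ext σ; simp [hS, and_comm]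
        rw [this]
        exact ContinuousOn.preimage_isClosed_of_isClosed
          (hY.mono (Icc_subset_Icc h0s hxt)) isClosed_Icc isClosed_Iic
      have hSbdd : BddBelow S := ⟨s, fun σ hσ => hσ.1.1⟩
      set σs := sInf S with hσs
      have hσsS : σs ∈ S := hSclosed.csInf_mem hSne hSbdd
      have hσsIcc : σs ∈ Icc s x := hσsS.1
      have hYσs_le : Y σs ≤ rinf Y s := hσsS.2
      -- everything in [s, σs) is above the level
      have hAbove : ∀ τ, s ≤ τ → τ < σs → rinf Y s ≤ Y τ := by
        intro τ hsτ hτσ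
        by_contra hlt
        push_neg at hlt
        exact absurd (csInf_le hSbdd ⟨⟨hsτ, le_trans hτσ.le hσsIcc.2⟩, hlt.le⟩)
          (not_le.2 hτσ)
      -- Y σs ≥ rinf Y s, by left limits (or trivially if σs = s)
      have hYσs_ge : rinf Y s ≤ Y σs := by
        rcases eq_or_lt_of_le hσsIcc.1 with heq | hlt
        · -- σs = s: Y s ≥ J s always
          rw [← heq]
          exact hJle s (left_mem_Icc.2 hsx)
        · have htends : Filter.Tendsto Y (nhdsWithin σs (Ioo s σs)) (nhds (Y σs)) := by
            have h1 : ContinuousWithinAt Y (Icc 0 t) σs :=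
              hY σs ⟨le_trans h0s hσsIcc.1, le_trans hσsIcc.2 hxt⟩
            refine h1.tendsto.mono_left (nhdsWithin_mono σs ?_)
            intro τ hτ
            exact ⟨le_trans h0s hτ.1.le, le_trans hτ.2.le (le_trans hσsIcc.2 hxt)⟩
          have hev : ∀ᶠ τ in nhdsWithin σs (Ioo s σs), rinf Y s ≤ Y τ := by
            filter_upwards [self_mem_nhdsWithin] with τ hτ
            exact hAbove τ hτ.1.le hτ.2
          haveI : Filter.NeBot (nhdsWithin σs (Ioo s σs)) := right_nhdsWithin_Ioo_neBot hlt
          exact ge_of_tendsto htends hev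
      have hYσs : Y σs = rinf Y s := le_antisymm hYσs_le hYσs_ge
      -- rinf Y σs = rinf Y s
      have hJσs : rinf Y σs = rinf Y s := by
        rw [hJsplit σs hσsIcc]
        refine min_eq_left ?_
        apply le_sInf_image hσsIcc.1
        intro τ hτ
        rcases eq_or_lt_of_le hτ.2 with heq | hlt
        · rw [heq, hYσs]
        · exact hAbove τ hτ.1 hlt
      have : (fun σ => Y σ - 2 * rinf Y σ) σs = -(rinf Y s) := by
        dsimp only; rw [hYσs, hJσs]; ring
      rw [← this]
      apply sInf_image_le _ hσsIcc
      refine bddBelow_of_forall (C := C - 2 * rinf Y s) ?_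
      intro σ hσ
      have h1 := hCx σ ⟨le_trans h0s hσ.1, hσ.2⟩
      have h2' := hJmono σ hσ
      show C - 2 * rinf Y s ≤ Y σ - 2 * rinf Y σ
      linarith
    · -- lower bound
      apply le_sInf_image hsx
      intro σ hσ
      have h1 := hJle σ hσ
      have h2' := hJmono σ hσ
      linarith


/-- swap of nested infima:
`inf_{σ∈[0,x]} (A σ + inf_{s∈[0,σ]} B s) = inf_{s∈[0,x]} (B s + inf_{σ∈[s,x]} A σ)`. -/
lemma sInf_swap {A B : ℝ → ℝ} {x CA CB : ℝ} (hx : 0 ≤ x)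
    (hA : ∀ u ∈ Icc 0 x, CA ≤ A u) (hB : ∀ u ∈ Icc 0 x, CB ≤ B u) :
    sInf ((fun σ => A σ + sInf (B '' Icc 0 σ)) '' Icc 0 x)
      = sInf ((fun s => B s + sInf (A '' Icc s x)) '' Icc 0 x) := by
  have hBl : ∀ σ ∈ Icc (0:ℝ) x, CB ≤ sInf (B '' Icc 0 σ) := fun σ hσ =>
    le_csInf ((nonempty_Icc.2 hσ.1).image _)
      (by rintro y ⟨u, hu, rfl⟩; exact hB u ⟨hu.1, le_trans hu.2 hσ.2⟩)
  have hAl : ∀ s ∈ Icc (0:ℝ) x, CA ≤ sInf (A '' Icc s x) := fun s hs =>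
    le_csInf ((nonempty_Icc.2 hs.2).image _)
      (by rintro y ⟨u, hu, rfl⟩; exact hA u ⟨le_trans hs.1 hu.1, hu.2⟩)
  apply le_antisymm
  · apply le_csInf ((nonempty_Icc.2 hx).image _)
    rintro y ⟨s, hs, rfl⟩
    show sInf _ ≤ B s + sInf (A '' Icc s x)
    rw [← sub_le_iff_le_add']
    apply le_csInf ((nonempty_Icc.2 hs.2).image _)
    rintro z ⟨σ, hσ, rfl⟩
    rw [sub_le_iff_le_add']
    have hσx : σ ∈ Icc (0:ℝ) x := ⟨le_trans hs.1 hσ.1, hσ.2⟩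
    have key : A σ + sInf (B '' Icc 0 σ) ≤ A σ + B s :=
      add_le_add_right (csInf_le (bddBelow_of_forall (C := CB)
        (fun u hu => hB u ⟨hu.1, le_trans hu.2 hσx.2⟩)) ⟨s, ⟨hs.1, hσ.1⟩, rfl⟩) _
    calc sInf ((fun σ => A σ + sInf (B '' Icc 0 σ)) '' Icc 0 x)
        ≤ A σ + sInf (B '' Icc 0 σ) := csInf_le (bddBelow_of_forall (C := CA + CB)
          (fun u hu => add_le_add (hA u hu) (hBl u hu))) ⟨σ, hσx, rfl⟩
      _ ≤ A σ + B s := key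
      _ = B s + A σ := by ring
  · apply le_csInf ((nonempty_Icc.2 hx).image _)
    rintro y ⟨σ, hσ, rfl⟩
    show sInf _ ≤ A σ + sInf (B '' Icc 0 σ)
    rw [← sub_le_iff_le_add']
    apply le_csInf ((nonempty_Icc.2 hσ.1).image _)
    rintro z ⟨s, hs, rfl⟩
    rw [sub_le_iff_le_add']
    have hsx : s ∈ Icc (0:ℝ) x := ⟨hs.1, le_trans hs.2 hσ.2⟩
    calc sInf ((fun s => B s + sInf (A '' Icc s x)) '' Icc 0 x)
        ≤ B s + sInf (A '' Icc s x) := csInf_le (bddBelow_of_forall (C := CB + CA)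
          (fun u hu => add_le_add (hB u hu) (hAl u hu))) ⟨s, hsx, rfl⟩
      _ ≤ B s + A σ := add_le_add_right (csInf_le (bddBelow_of_forall (C := CA)
          (fun u hu => hA u ⟨le_trans hs.1 hu.1, hu.2⟩)) ⟨σ, ⟨hs.2, hσ.2⟩, rfl⟩) _
      _ = A σ + B s := by ring

/-! ### chain infima -/

/-- The set of values of weighted sums over antitone chains of length `k` in `[0,x]`. -/
def chSet (f : ℕ → ℝ → ℝ) (k : ℕ) (x : ℝ) : Set ℝ :=
  {y | ∃ s : Fin k → ℝ, Antitone s ∧ (∀ i, s i ∈ Icc 0 x) ∧ y = ∑ i : Fin k, f i (s i)}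

noncomputable def chInf (f : ℕ → ℝ → ℝ) (k : ℕ) (x : ℝ) : ℝ := sInf (chSet f k x)

lemma chSet_zero (f : ℕ → ℝ → ℝ) (x : ℝ) : chSet f 0 x = {0} := by
  ext y
  constructor
  · rintro ⟨s, -, -, rfl⟩; simp
  · rintro rfl
    exact ⟨fun i => i.elim0, fun i => i.elim0, fun i => i.elim0, by simp⟩

lemma chInf_zero (f : ℕ → ℝ → ℝ) (x : ℝ) : chInf f 0 x = 0 := by
  rw [chInf, chSet_zero]; exact csInf_singleton 0

lemma chSet_nonempty (f : ℕ → ℝ → ℝ) (k : ℕ) {x : ℝ} (hx : 0 ≤ x) :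
    (chSet f k x).Nonempty := by
  refine ⟨∑ i : Fin k, f i 0, fun _ => 0, antitone_const, fun i => left_mem_Icc.2 hx, rfl⟩

lemma chSet_subset (f : ℕ → ℝ → ℝ) (k : ℕ) {u x : ℝ} (hux : u ≤ x) :
    chSet f k u ⊆ chSet f k x := by
  rintro y ⟨s, h1, h2, rfl⟩
  exact ⟨s, h1, fun i => ⟨(h2 i).1, le_trans (h2 i).2 hux⟩, rfl⟩

lemma chSet_lb {f : ℕ → ℝ → ℝ} {k : ℕ} {x : ℝ}
    (hf : ∀ i, i < k → ∃ C, ∀ u ∈ Icc (0:ℝ) x, C ≤ f i u) :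
    ∃ D, ∀ y ∈ chSet f k x, D ≤ y := by
  have h : ∀ i : Fin k, ∃ C, ∀ u ∈ Icc (0:ℝ) x, C ≤ f i u := fun i => hf i i.isLt
  choose C hC using h
  refine ⟨∑ i : Fin k, C i, ?_⟩
  rintro y ⟨s, -, h2, rfl⟩
  exact Finset.sum_le_sum (fun i _ => hC i (s i) (h2 i))

lemma chInf_lb {f : ℕ → ℝ → ℝ} {k : ℕ} {x : ℝ} (hx : 0 ≤ x)
    (hf : ∀ i, i < k → ∃ C, ∀ u ∈ Icc (0:ℝ) x, C ≤ f i u) :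
    ∃ D, ∀ u ∈ Icc (0:ℝ) x, D ≤ chInf f k u := by
  obtain ⟨D, hD⟩ := chSet_lb hf
  refine ⟨D, fun u hu => le_csInf (chSet_nonempty f k hu.1) ?_⟩
  exact fun y hy => hD y (chSet_subset f k hu.2 hy)

lemma chSet_bddBelow {f : ℕ → ℝ → ℝ} {k : ℕ} {x : ℝ}
    (hf : ∀ i, i < k → ∃ C, ∀ u ∈ Icc (0:ℝ) x, C ≤ f i u) :
    BddBelow (chSet f k x) := by
  obtain ⟨D, hD⟩ := chSet_lb hf
  exact ⟨D, hD⟩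

lemma chInf_congr {f g : ℕ → ℝ → ℝ} {k : ℕ} {x : ℝ}
    (h : ∀ i, i < k → ∀ u ∈ Icc (0:ℝ) x, f i u = g i u) :
    chInf f k x = chInf g k x := by
  have : chSet f k x = chSet g k x := by
    ext y
    constructor <;> rintro ⟨s, h1, h2, rfl⟩ <;>
      exact ⟨s, h1, h2, Finset.sum_congr rfl (fun i _ => by
        rw [h i i.isLt (s i) (h2 i)])⟩ <;> try rw [← h]
  rw [chInf, this, chInf]

lemma antitone_cons {k : ℕ} (u : ℝ) (s : Fin k → ℝ) (hs : Antitone s)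
    (h : ∀ i, s i ≤ u) : Antitone (Fin.cons u s : Fin (k+1) → ℝ) := by
  intro i j hij
  rcases Fin.eq_zero_or_eq_succ i with rfl | ⟨i', rfl⟩
  · rcases Fin.eq_zero_or_eq_succ j with rfl | ⟨j', rfl⟩
    · exact le_rfl
    · simp only [Fin.cons_zero, Fin.cons_succ]; exact h j'
  · rcases Fin.eq_zero_or_eq_succ j with rfl | ⟨j', rfl⟩
    · exact absurd (le_antisymm hij (Fin.zero_le _)) (Fin.succ_ne_zero i')
    · simp only [Fin.cons_succ]
      exact hs (Fin.succ_le_succ_iff.1 hij)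

/-- Peeling the top point off a chain infimum. -/
lemma chInf_succ {f : ℕ → ℝ → ℝ} {k : ℕ} {x : ℝ} (hx : 0 ≤ x)
    (hf : ∀ i, i < k + 1 → ∃ C, ∀ u ∈ Icc (0:ℝ) x, C ≤ f i u) :
    chInf f (k+1) x
      = sInf ((fun u => f 0 u + chInf (fun i => f (i+1)) k u) '' Icc 0 x) := by
  have hftail : ∀ i, i < k → ∃ C, ∀ u ∈ Icc (0:ℝ) x, C ≤ f (i+1) u :=
    fun i hi => hf (i+1) (by omega)
  obtain ⟨D, hD⟩ := chInf_lb hx hftail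
  obtain ⟨C0, hC0⟩ := hf 0 (by omega)
  apply le_antisymm
  · apply le_csInf ((nonempty_Icc.2 hx).image _)
    rintro y ⟨u, hu, rfl⟩
    show chInf f (k+1) x ≤ f 0 u + chInf (fun i => f (i+1)) k u
    rw [← sub_le_iff_le_add']
    apply le_csInf (chSet_nonempty _ k hu.1)
    rintro z ⟨s, h1, h2, rfl⟩
    rw [sub_le_iff_le_add']
    apply csInf_le (chSet_bddBelow hf)
    refine ⟨Fin.cons u s, antitone_cons u s h1 (fun i => (h2 i).2), ?_, ?_⟩
    · intro i
      refine Fin.cases ?_ (fun i' => ?_) i <;> simp only [Fin.cons_zero, Fin.cons_succ]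
      · exact hu
      · exact ⟨(h2 i').1, le_trans (h2 i').2 hu.2⟩
    · rw [Fin.sum_univ_succ]
      simp only [Fin.cons_zero, Fin.cons_succ, Fin.val_succ, Fin.val_zero]
  · apply le_csInf (chSet_nonempty f (k+1) hx)
    rintro y ⟨s, h1, h2, rfl⟩
    have htail : (∑ i : Fin k, f (i+1) (s i.succ)) ∈ chSet (fun i => f (i+1)) k (s 0) := by
      refine ⟨fun i => s i.succ, fun i j hij => h1 (Fin.succ_le_succ_iff.2 hij), ?_, rfl⟩
      exact fun i => ⟨(h2 i.succ).1, h1 (Fin.zero_le i.succ)⟩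
    calc sInf ((fun u => f 0 u + chInf (fun i => f (i+1)) k u) '' Icc 0 x)
        ≤ f 0 (s 0) + chInf (fun i => f (i+1)) k (s 0) := by
          apply csInf_le (bddBelow_of_forall (C := C0 + D)
            (fun u hu => add_le_add (hC0 u hu) (hD u hu)))
          exact ⟨s 0, h2 0, rfl⟩
      _ ≤ f 0 (s 0) + ∑ i : Fin k, f (i+1) (s i.succ) := by
          apply add_le_add_right
          exact csInf_le (chSet_bddBelow (fun i hi => by
            obtain ⟨C, hC⟩ := hftail i hi
            exact ⟨C, fun u hu => hC u ⟨hu.1, le_trans hu.2 (h2 0).2⟩⟩)) htail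
      _ = ∑ i : Fin (k+1), f i (s i) := by
          rw [Fin.sum_univ_succ]
          simp only [Fin.val_succ, Fin.val_zero]


/-! ### Alternating weighted families and the main scalar identities -/

/-- `altF w g h i = w i * (g or h)` alternating, `g` at even indices. -/
def altF (w : ℕ → ℝ) (g h : ℝ → ℝ) : ℕ → ℝ → ℝ :=
  fun i u => w i * (if Even i then g u else h u)

lemma altF_succ (w : ℕ → ℝ) (g h : ℝ → ℝ) :
    (fun i => altF w g h (i+1)) = altF (fun i => w (i+1)) h g := by
  funext i u
  simp only [altF, Nat.even_add_one]
  by_cases hi : Even i <;> simp [hi]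

lemma altF_lb_all {w : ℕ → ℝ} {g h : ℝ → ℝ} {x Cg Ch : ℝ} {n : ℕ}
    (hw : ∀ i, i < n → 0 ≤ w i)
    (hg : ∀ u ∈ Icc (0:ℝ) x, Cg ≤ g u) (hh : ∀ u ∈ Icc (0:ℝ) x, Ch ≤ h u) :
    ∀ i, i < n → ∃ C, ∀ u ∈ Icc (0:ℝ) x, C ≤ altF w g h i u := by
  intro i hi
  refine ⟨min (w i * Cg) (w i * Ch), fun u hu => ?_⟩
  by_cases hp : Even i
  · simp only [altF, if_pos hp]
    exact le_trans (min_le_left _ _) (mul_le_mul_of_nonneg_left (hg u hu) (hw i hi))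
  · simp only [altF, if_neg hp]
    exact le_trans (min_le_right _ _) (mul_le_mul_of_nonneg_left (hh u hu) (hw i hi))

section Main

variable {t ρ : ℝ} {X Y : ℝ → ℝ}

/-- MAIN-B: the one-step Pitman identity for alternating chain infima, `Y`-leading,
odd length `2k+1`. -/
theorem mainB (hρ : 0 ≤ ρ) (ht : 0 ≤ t) (hY : ContinuousOn Y (Icc 0 t))
    {CX CY : ℝ} (hCX : ∀ u ∈ Icc (0:ℝ) t, CX ≤ X u)
    (hCY : ∀ u ∈ Icc (0:ℝ) t, CY ≤ Y u) :
    ∀ (k : ℕ) (w : ℕ → ℝ), (∀ i, i ≤ 2*k → 0 ≤ w i) →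
    (∀ i, i + 2 ≤ 2*k → w (i+2) = 2*ρ*w (i+1) - w i) →
    ∀ {x : ℝ}, 0 ≤ x → x ≤ t →
    chInf (altF w Y X) (2*k+1) x
      = w 0 * rinf Y x
        + chInf (altF w (fun u => Y u - 2 * rinf Y u)
            (fun u => X u + 2*ρ*rinf Y u)) (2*k) x := by
  -- preliminary bounds
  have hJub : ∀ u ∈ Icc (0:ℝ) t, rinf Y u ≤ Y 0 := by
    intro u hu
    exact rinf_le (fun v hv => hCY v ⟨hv.1, le_trans hv.2 hu.2⟩) (left_mem_Icc.2 hu.1)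
  have hJlb : ∀ u ∈ Icc (0:ℝ) t, CY ≤ rinf Y u := by
    intro u hu
    exact le_rinf hu.1 (fun v hv => hCY v ⟨hv.1, le_trans hv.2 hu.2⟩)
  set Yh : ℝ → ℝ := fun u => Y u - 2 * rinf Y u with hYh
  set Xh : ℝ → ℝ := fun u => X u + 2*ρ*rinf Y u with hXh
  have hYh_lb : ∀ u ∈ Icc (0:ℝ) t, CY - 2 * Y 0 ≤ Yh u := by
    intro u hu
    have := hJub u hu; have := hCY u hu
    simp only [hYh]; linarith
  have hXh_lb : ∀ u ∈ Icc (0:ℝ) t, CX + 2*ρ*CY ≤ Xh u := by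
    intro u hu
    have h1 := hJlb u hu; have h2 := hCX u hu
    have : 2*ρ*CY ≤ 2*ρ*rinf Y u := by
      apply mul_le_mul_of_nonneg_left h1 (by linarith)
    simp only [hXh]; linarith
  intro k
  induction k with
  | zero =>
    intro w hw hrec x hx hxt
    have hw0 : 0 ≤ w 0 := hw 0 (by omega)
    have hIcc : Icc (0:ℝ) x ⊆ Icc 0 t := Icc_subset_Icc le_rfl hxt
    rw [chInf_zero, add_zero]
    rw [show 2*0+1 = 0+1 from rfl]
    rw [chInf_succ hx (altF_lb_all (fun i _ => hw i (by omega))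
      (fun u hu => hCY u (hIcc hu)) (fun u hu => hCX u (hIcc hu)))]
    have himg : (fun u => altF w Y X 0 u + chInf (fun i => altF w Y X (i+1)) 0 u)
        '' Icc 0 x = (fun u => w 0 * Y u) '' Icc 0 x := by
      apply Set.image_congr
      intro u hu
      rw [chInf_zero]
      simp [altF]
    rw [himg, sInf_image_const_mul hw0]
    rfl
  | succ k IH =>
    intro w hw hrec x hx hxt
    have hIcc : Icc (0:ℝ) x ⊆ Icc 0 t := Icc_subset_Icc le_rfl hxt
    have hw0 : 0 ≤ w 0 := hw 0 (by omega)
    have hw1 : 0 ≤ w 1 := hw 1 (by omega)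
    have hrec0 : w 2 = 2*ρ*w 1 - w 0 := hrec 0 (by omega)
    set w' : ℕ → ℝ := fun i => w (i+1) with hw'def
    set w'' : ℕ → ℝ := fun i => w (i+2) with hw''def
    set H : ℝ → ℝ := fun s => chInf (altF w'' Yh Xh) (2*k) s with hHdef
    set WW : ℝ → ℝ := fun s => w 1 * Xh s + H s with hWWdef
    -- bounds
    obtain ⟨DH, hDH⟩ : ∃ D, ∀ u ∈ Icc (0:ℝ) t, D ≤ H u := by
      apply chInf_lb ht
      exact altF_lb_all (fun i hi => hw (i+2) (by omega)) hYh_lb hXh_lb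
    have hWWlb : ∀ u ∈ Icc (0:ℝ) t, w 1 * (CX + 2*ρ*CY) + DH ≤ WW u := by
      intro u hu
      have h1 := mul_le_mul_of_nonneg_left (hXh_lb u hu) hw1
      have h2 := hDH u hu
      simp only [hWWdef]; linarith
    have hJub' := hJub
    -- Step 1: peel outer layer
    rw [show 2*(k+1)+1 = (2*k+2)+1 from by ring]
    rw [chInf_succ hx (altF_lb_all (fun i _ => hw i (by omega))
      (fun u hu => hCY u (hIcc hu)) (fun u hu => hCX u (hIcc hu)))]
    rw [altF_succ w Y X]
    -- Step 2: inner identity for σ ∈ [0,x]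
    have inner : ∀ σ ∈ Icc (0:ℝ) x,
        chInf (altF w' X Y) (2*k+2) σ
          = sInf ((fun s => WW s - w 0 * rinf Y s) '' Icc 0 σ) := by
      intro σ hσ
      have hσt : σ ≤ t := le_trans hσ.2 hxt
      have hIccσ : Icc (0:ℝ) σ ⊆ Icc 0 t := Icc_subset_Icc le_rfl hσt
      rw [show 2*k+2 = (2*k+1)+1 from by ring]
      rw [chInf_succ hσ.1 (altF_lb_all (fun i _ => hw (i+1) (by omega))
        (fun u hu => hCX u (hIccσ hu)) (fun u hu => hCY u (hIccσ hu)))]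
      rw [altF_succ w' X Y]
      apply congrArg sInf
      apply Set.image_congr
      intro s hs
      have hst : s ≤ t := le_trans hs.2 hσt
      have hIH := IH w'' (fun i hi => hw (i+2) (by omega))
        (fun i hi => hrec (i+2) (by omega)) hs.1 hst
      have : (fun i => w' (i+1)) = w'' := by funext i; simp [hw'def, hw''def]
      rw [this] at *
      rw [hIH]
      have hrecc : w'' 0 = 2*ρ*w 1 - w 0 := by simp [hw''def]; exact hrec0
      simp only [altF, if_pos (Even.zero), hWWdef, hXh, hHdef]
      rw [hrecc]
      ring
    -- Step 3: rewrite outer integrand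
    have himg1 : (fun σ => altF w Y X 0 σ + chInf (altF w' X Y) (2*k+2) σ) '' Icc 0 x
        = (fun σ => (w 0 * Y σ) + sInf ((fun s => WW s - w 0 * rinf Y s) '' Icc 0 σ))
            '' Icc 0 x := by
      apply Set.image_congr
      intro σ hσ
      rw [inner σ hσ]
      simp [altF]
    rw [himg1]
    -- Step 4: swap
    have hBlb : ∀ u ∈ Icc (0:ℝ) x, (w 1 * (CX + 2*ρ*CY) + DH) - w 0 * Y 0
        ≤ WW u - w 0 * rinf Y u := by
      intro u hu
      have h1 := hWWlb u (hIcc hu)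
      have h2 := mul_le_mul_of_nonneg_left (hJub u (hIcc hu)) hw0
      linarith
    have hAlb : ∀ u ∈ Icc (0:ℝ) x, w 0 * CY ≤ w 0 * Y u := by
      intro u hu
      exact mul_le_mul_of_nonneg_left (hCY u (hIcc hu)) hw0
    rw [sInf_swap hx hAlb hBlb]
    -- Step 5: pointwise rewrite using key_pointwise
    have himg2 : (fun s => (WW s - w 0 * rinf Y s) + sInf ((fun σ => w 0 * Y σ) '' Icc s x))
        '' Icc 0 x
        = (fun s => (w 0 * rinf Y x) + (WW s + sInf ((fun σ => w 0 * Yh σ) '' Icc s x)))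
            '' Icc 0 x := by
      apply Set.image_congr
      intro s hs
      rw [sInf_image_const_mul hw0, sInf_image_const_mul hw0]
      rw [show sInf (Yh '' Icc s x) = sInf (Y '' Icc s x) - rinf Y s - rinf Y x from
        key_pointwise hY hs.1 hs.2 hxt]
      ring
    rw [himg2]
    -- Step 6: constant out
    have hlb6 : ∀ s ∈ Icc (0:ℝ) x, (w 1 * (CX + 2*ρ*CY) + DH) + w 0 * (CY - 2*Y 0)
        ≤ WW s + sInf ((fun σ => w 0 * Yh σ) '' Icc s x) := by
      intro s hs
      have h1 := hWWlb s (hIcc hs)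
      have h2 : w 0 * (CY - 2*Y 0) ≤ sInf ((fun σ => w 0 * Yh σ) '' Icc s x) := by
        apply le_sInf_image hs.2
        intro v hv
        exact mul_le_mul_of_nonneg_left (hYh_lb v (hIcc ⟨le_trans hs.1 hv.1, hv.2⟩)) hw0
      linarith
    rw [sInf_image_add_const hx hlb6]
    -- Step 7: swap back
    have hA2lb : ∀ u ∈ Icc (0:ℝ) x, w 0 * (CY - 2*Y 0) ≤ w 0 * Yh u := by
      intro u hu
      exact mul_le_mul_of_nonneg_left (hYh_lb u (hIcc hu)) hw0
    have hB2lb : ∀ u ∈ Icc (0:ℝ) x, w 1 * (CX + 2*ρ*CY) + DH ≤ WW u :=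
      fun u hu => hWWlb u (hIcc hu)
    rw [← sInf_swap hx hA2lb hB2lb]
    -- Step 8/9: unpeel
    have himg3 : (fun σ => w 0 * Yh σ + sInf (WW '' Icc 0 σ)) '' Icc 0 x
        = (fun σ => altF w Yh Xh 0 σ + chInf (fun i => altF w Yh Xh (i+1)) (2*k+1) σ)
            '' Icc 0 x := by
      apply Set.image_congr
      intro σ hσ
      have hσt : σ ≤ t := le_trans hσ.2 hxt
      have hIccσ : Icc (0:ℝ) σ ⊆ Icc 0 t := Icc_subset_Icc le_rfl hσt
      rw [altF_succ w Yh Xh]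
      rw [show chInf (altF w' Xh Yh) (2*k+1) σ
          = sInf ((fun s => altF w' Xh Yh 0 s
              + chInf (fun i => altF w' Xh Yh (i+1)) (2*k) s) '' Icc 0 σ) from
        chInf_succ hσ.1 (altF_lb_all (fun i _ => hw (i+1) (by omega))
          (fun u hu => hXh_lb u (hIccσ hu)) (fun u hu => hYh_lb u (hIccσ hu)))]
      rw [altF_succ w' Xh Yh]
      have : (fun i => w' (i+1)) = w'' := by funext i; simp [hw'def, hw''def]
      rw [this]
      have himg4 : (fun s => altF w' Xh Yh 0 s + chInf (altF w'' Yh Xh) (2*k) s) '' Icc 0 σ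
          = WW '' Icc 0 σ := by
        apply Set.image_congr
        intro s hs
        simp only [altF, if_pos Even.zero, hWWdef, hHdef, hw'def]
      rw [himg4]
      simp [altF]
    rw [himg3]
    rw [show 2*(k+1) = (2*k+1)+1 from by ring]
    rw [chInf_succ hx (altF_lb_all (n := (2*k+1)+1) (fun i _ => hw i (by omega))
      (fun u hu => hYh_lb u (hIcc hu)) (fun u hu => hXh_lb u (hIcc hu)))]

/-- MAIN-A: the companion identity, `X`-leading, even length `2k+2`. -/
theorem mainA (hρ : 0 ≤ ρ) (ht : 0 ≤ t) (hY : ContinuousOn Y (Icc 0 t))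
    {CX CY : ℝ} (hCX : ∀ u ∈ Icc (0:ℝ) t, CX ≤ X u)
    (hCY : ∀ u ∈ Icc (0:ℝ) t, CY ≤ Y u)
    (k : ℕ) (w : ℕ → ℝ) (hw : ∀ i, i ≤ 2*k+1 → 0 ≤ w i)
    (hrec : ∀ i, i + 2 ≤ 2*k+1 → w (i+2) = 2*ρ*w (i+1) - w i)
    (h10 : w 1 = 2*ρ*w 0)
    {x : ℝ} (hx : 0 ≤ x) (hxt : x ≤ t) :
    chInf (altF w X Y) (2*k+2) x
      = chInf (altF w (fun u => X u + 2*ρ*rinf Y u)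
          (fun u => Y u - 2 * rinf Y u)) (2*k+1) x := by
  have hIcc : Icc (0:ℝ) x ⊆ Icc 0 t := Icc_subset_Icc le_rfl hxt
  have hJub : ∀ u ∈ Icc (0:ℝ) t, rinf Y u ≤ Y 0 := by
    intro u hu
    exact rinf_le (fun v hv => hCY v ⟨hv.1, le_trans hv.2 hu.2⟩) (left_mem_Icc.2 hu.1)
  have hJlb : ∀ u ∈ Icc (0:ℝ) t, CY ≤ rinf Y u := by
    intro u hu
    exact le_rinf hu.1 (fun v hv => hCY v ⟨hv.1, le_trans hv.2 hu.2⟩)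
  set Yh : ℝ → ℝ := fun u => Y u - 2 * rinf Y u with hYh
  set Xh : ℝ → ℝ := fun u => X u + 2*ρ*rinf Y u with hXh
  have hYh_lb : ∀ u ∈ Icc (0:ℝ) t, CY - 2 * Y 0 ≤ Yh u := by
    intro u hu
    have := hJub u hu; have := hCY u hu
    simp only [hYh]; linarith
  have hXh_lb : ∀ u ∈ Icc (0:ℝ) t, CX + 2*ρ*CY ≤ Xh u := by
    intro u hu
    have h1 := hJlb u hu; have h2 := hCX u hu
    have : 2*ρ*CY ≤ 2*ρ*rinf Y u := mul_le_mul_of_nonneg_left h1 (by linarith)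
    simp only [hXh]; linarith
  rw [show 2*k+2 = (2*k+1)+1 from by ring]
  rw [chInf_succ hx (altF_lb_all (n := (2*k+1)+1) (fun i _ => hw i (by omega))
    (fun u hu => hCX u (hIcc hu)) (fun u hu => hCY u (hIcc hu)))]
  rw [altF_succ w X Y]
  have himg : (fun s => altF w X Y 0 s
        + chInf (altF (fun i => w (i+1)) Y X) (2*k+1) s) '' Icc 0 x
      = (fun s => altF w Xh Yh 0 s
        + chInf (fun i => altF w Xh Yh (i+1)) (2*k) s) '' Icc 0 x := by
    apply Set.image_congr
    intro s hs
    have hst : s ≤ t := le_trans hs.2 hxt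
    rw [mainB hρ ht hY hCX hCY k (fun i => w (i+1))
      (fun i hi => hw (i+1) (by omega)) (fun i hi => hrec (i+1) (by omega)) hs.1 hst]
    rw [altF_succ w Xh Yh]
    simp only [altF, if_pos Even.zero]
    rw [h10]
    simp only [hXh]
    ring
  rw [himg]
  rw [← chInf_succ hx (altF_lb_all (n := (2*k)+1) (fun i _ => hw i (by omega))
    (fun u hu => hXh_lb u (hIcc hu)) (fun u hu => hYh_lb u (hIcc hu)))]

/-! ### Chebyshev positivity -/

open Polynomial.Chebyshev in
lemma chebU_eval_rec (ρ : ℝ) (i : ℕ) :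
    (Polynomial.Chebyshev.U ℝ ((i:ℤ)+2)).eval ρ
      = 2*ρ*(Polynomial.Chebyshev.U ℝ ((i:ℤ)+1)).eval ρ
        - (Polynomial.Chebyshev.U ℝ (i:ℤ)).eval ρ := by
  rw [Polynomial.Chebyshev.U_add_two]
  simp only [Polynomial.eval_sub, Polynomial.eval_mul, Polynomial.eval_ofNat,
    Polynomial.eval_X]

open Polynomial.Chebyshev in
lemma chebU_eval_nonneg {ρ : ℝ} {n : ℕ} (hn : 1 ≤ n) (hρpos : 0 < ρ)
    (hρ : Real.cos (Real.pi / n) ≤ ρ) :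
    ∀ i : ℕ, i + 1 ≤ n → 0 ≤ (Polynomial.Chebyshev.U ℝ (i:ℤ)).eval ρ := by
  rcases le_or_gt 1 ρ with h1 | h1
  · -- ρ ≥ 1 : increasing positive sequence
    have key : ∀ i : ℕ, 0 ≤ (U ℝ (i:ℤ)).eval ρ ∧
        (U ℝ (i:ℤ)).eval ρ ≤ (U ℝ ((i:ℤ)+1)).eval ρ ∧ 1 ≤ (U ℝ (i:ℤ)).eval ρ := by
      intro i
      induction i with
      | zero => 
        simp [Polynomial.Chebyshev.U_zero, Polynomial.Chebyshev.U_one]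
        nlinarith
      | succ j hj =>
        obtain ⟨h2, h3, h4⟩ := hj
        have hrec := chebU_eval_rec ρ j
        have hj1 : (1:ℝ) ≤ (U ℝ ((j:ℤ)+1)).eval ρ := le_trans h4 h3
        have push : ((j+1 : ℕ):ℤ) = (j:ℤ)+1 := by push_cast; ring
        rw [push]
        refine ⟨by linarith, ?_, by linarith⟩
        have : (U ℝ ((j:ℤ)+1+1)).eval ρ = 2*ρ*(U ℝ ((j:ℤ)+1)).eval ρ - (U ℝ (j:ℤ)).eval ρ := by
          rw [show (j:ℤ)+1+1 = (j:ℤ)+2 from by ring]; exact hrec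
        rw [this]
        nlinarith
    exact fun i _ => (key i).1
  · -- ρ < 1 : use the trigonometric formula
    intro i hi
    set θ := Real.arccos ρ with hθ
    have hρ1 : ρ ≤ 1 := h1.le
    have hρm1 : (-1:ℝ) ≤ ρ := by linarith
    have hcos : Real.cos θ = ρ := Real.cos_arccos hρm1 hρ1
    have hθpos : 0 < θ := Real.arccos_pos.2 h1
    have hθpi2 : θ < Real.pi / 2 := Real.arccos_lt_pi_div_two.2 hρpos
    have hθpi : θ < Real.pi := lt_trans hθpi2 (by linarith [Real.pi_pos])
    have hsin : 0 < Real.sin θ := Real.sin_pos_of_pos_of_lt_pi hθpos hθpi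
    -- θ ≤ π / n
    have hπn_mem : Real.pi / n ≤ Real.pi := by
      rw [div_le_iff₀ (by exact_mod_cast Nat.cast_pos.2 hn : (0:ℝ) < n)]
      nlinarith [Real.pi_pos, (by exact_mod_cast Nat.one_le_cast.2 hn : (1:ℝ) ≤ n)]
    have hθn : θ ≤ Real.pi / n := by
      have : Real.arccos ρ ≤ Real.arccos (Real.cos (Real.pi / n)) := by
        rw [Real.arccos_eq_pi_div_two_sub_arcsin, Real.arccos_eq_pi_div_two_sub_arcsin]
        have := Real.monotone_arcsin hρ
        linarith
      rwa [Real.arccos_cos (by positivity) hπn_mem] at this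
    have hval := Polynomial.Chebyshev.U_real_cos θ (i:ℤ)
    rw [hcos] at hval
    have hsin2 : 0 ≤ Real.sin (((i:ℤ)+1) * θ) := by
      apply Real.sin_nonneg_of_nonneg_of_le_pi
      · positivity
      · have h2 : ((i:ℝ)+1) * θ ≤ n * (Real.pi / n) := by
          apply mul_le_mul _ hθn hθpos.le (by positivity)
          exact_mod_cast hi
        rw [mul_div_cancel₀] at h2
        · exact_mod_cast h2
        · exact_mod_cast (Nat.pos_of_ne_zero (by omega) : 0 < n).ne'
    have h0 : 0 ≤ (Polynomial.Chebyshev.U ℝ (i:ℤ)).eval ρ * Real.sin θ := by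
      rw [hval]; exact hsin2
    exact nonneg_of_mul_nonneg_left h0 hsin

/-! ### continuity of the running infimum -/

lemma rinf_continuousOn {g : ℝ → ℝ} {T : ℝ} (hT : 0 ≤ T)
    (hg : ContinuousOn g (Icc 0 T)) : ContinuousOn (rinf g) (Icc 0 T) := by
  obtain ⟨C, hC⟩ := lb_of_continuousOn hg
  have huc := isCompact_Icc.uniformContinuousOn_of_continuous hg
  rw [Metric.uniformContinuousOn_iff] at huc
  rw [Metric.continuousOn_iff]
  intro u hu ε hε
  obtain ⟨δ, hδpos, hδ⟩ := huc (ε/2) (by linarith)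
  refine ⟨δ, hδpos, fun v hv hdist => ?_⟩
  -- key: for a ≤ b with b - a < δ, |rinf g b - rinf g a| ≤ ε/2
  have key : ∀ a b : ℝ, a ∈ Icc 0 T → b ∈ Icc 0 T → a ≤ b → b - a < δ →
      rinf g b ≤ rinf g a ∧ rinf g a - ε/2 ≤ rinf g b := by
    intro a b ha hb hab hd
    constructor
    · exact rinf_mono ha.1 hab (fun z hz => hC z ⟨hz.1, le_trans hz.2 hb.2⟩)
    · apply le_rinf (le_trans ha.1 hab)
      intro z hz
      rcases le_or_gt z a with hza | hza
      · have : rinf g a ≤ g z :=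
          rinf_le (fun y hy => hC y ⟨hy.1, le_trans hy.2 ha.2⟩) ⟨hz.1, hza⟩
        linarith
      · have hza' : z ∈ Icc (0:ℝ) T := ⟨hz.1, le_trans hz.2 hb.2⟩
        have hdz : dist z a < δ := by
          rw [Real.dist_eq, abs_lt]
          constructor <;> [linarith [hz.2]; linarith [hz.2]]
        have := hδ z hza' a ha (hdz)
        rw [Real.dist_eq, abs_lt] at this
        have hga : rinf g a ≤ g a :=
          rinf_le (fun y hy => hC y ⟨hy.1, le_trans hy.2 ha.2⟩) (right_mem_Icc.2 ha.1)
        linarith [this.2]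
  rw [Real.dist_eq] at hdist ⊢
  rcases le_total v u with hvu | huv
  · obtain ⟨h1, h2⟩ := key v u hv hu hvu (by rw [abs_lt] at hdist; linarith [hdist.1])
    rw [abs_lt]; constructor <;> linarith
  · obtain ⟨h1, h2⟩ := key u v hu hv huv (by rw [abs_lt] at hdist; linarith [hdist.2])
    rw [abs_lt]; constructor <;> linarith

end Main

/-! ### assembly -/

noncomputable def chebW (ρ : ℝ) : ℕ → ℝ := fun i => (Polynomial.Chebyshev.U ℝ (i:ℤ)).eval ρ

lemma chebW_rec (ρ : ℝ) (i : ℕ) : chebW ρ (i+2) = 2*ρ*chebW ρ (i+1) - chebW ρ i := by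
  have h := chebU_eval_rec ρ i
  simp only [chebW]
  push_cast
  convert h using 3 <;> push_cast <;> ring

lemma chebW_zero (ρ : ℝ) : chebW ρ 0 = 1 := by
  simp [chebW, Polynomial.Chebyshev.U_zero]

lemma chebW_one (ρ : ℝ) : chebW ρ 1 = 2*ρ := by
  simp [chebW, Polynomial.Chebyshev.U_one]

lemma altComp_succ_right {γ : Type*} (n : ℕ) : ∀ P Q : γ → γ,
    altComp P Q (n+1) = altComp P Q n ∘ (if Even n then P else Q) := by
  induction n with
  | zero =>
    intro P Q
    funext x
    simp [altComp]
  | succ m ih =>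
    intro P Q
    have h1 : altComp P Q (m+2) = P ∘ altComp Q P (m+1) := rfl
    rw [h1, ih Q P, ← Function.comp_assoc]
    have h2 : P ∘ altComp Q P m = altComp P Q (m+1) := rfl
    rw [h2]
    congr 1
    by_cases hm : Even m
    · simp [hm, Nat.even_add_one]
    · simp [hm, Nat.even_add_one]

section Assembly

variable {V : Type*} [NormedAddCommGroup V] [NormedSpace ℝ V] [FiniteDimensional ℝ V]
variable {T : ℝ} {α β : V} {αv βv : Module.Dual ℝ V} {ρ : ℝ}

theorem aux_formula (hT : 0 < T)
    (hα : αv α = 2) (hβ : βv β = 2) (hρpos : 0 < ρ)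
    (hαβ : αv β = -(2 * ρ)) (hβα : βv α = -(2 * ρ)) :
    ∀ n : ℕ, 1 ≤ n → Real.cos (Real.pi / n) ≤ ρ →
    ∀ π : ℝ → V, ContinuousOn π (Set.Icc 0 T) → π 0 = 0 → ∀ t ∈ Set.Icc 0 T,
    altComp (pitman α αv) (pitman β βv) n π t
      = π t - (chInf (altF (chebW ρ) (fun u => αv (π u)) (fun u => βv (π u))) n t) • α
            - (chInf (altF (chebW ρ) (fun u => βv (π u)) (fun u => αv (π u))) (n-1) t) • β := by
  intro n hn1
  induction n, hn1 using Nat.le_induction with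
  | base =>
    intro hρ1 π hπ hπ0 t ht
    have hX : ContinuousOn (fun u => αv (π u)) (Icc 0 T) :=
      (LinearMap.continuous_of_finiteDimensional αv).comp_continuousOn hπ
    obtain ⟨CX, hCX⟩ := lb_of_continuousOn hX
    have hshow : altComp (pitman α αv) (pitman β βv) 1 π t = pitman α αv π t := rfl
    rw [hshow]
    rw [show (1:ℕ) - 1 = 0 from rfl, chInf_zero, zero_smul, sub_zero]
    have hch : chInf (altF (chebW ρ) (fun u => αv (π u)) (fun u => βv (π u))) 1 t
        = sInf ((fun s => αv (π s)) '' Icc 0 t) := by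
      rw [show (1:ℕ) = 0 + 1 from rfl]
      rw [chInf_succ ht.1 (fun i hi => ⟨CX, fun u hu => by
        interval_cases i
        simp only [altF, if_pos Even.zero, chebW_zero, one_mul]
        exact hCX u ⟨hu.1, le_trans hu.2 ht.2⟩⟩)]
      apply congrArg sInf
      apply Set.image_congr
      intro u hu
      rw [chInf_zero, add_zero]
      simp [altF, chebW_zero]
    rw [hch]
    rfl
  | succ n hn IH =>
    intro hρn1 π hπ hπ0 t ht
    -- the hypothesis at level n
    have hnR : (0:ℝ) < n := by exact_mod_cast hn
    have hπn_le : Real.pi / (n:ℝ) ≤ Real.pi := by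
      rw [div_le_iff₀ hnR]
      nlinarith [Real.pi_pos, (by exact_mod_cast Nat.one_le_cast.2 hn : (1:ℝ) ≤ (n:ℝ))]
    have hρn : Real.cos (Real.pi / n) ≤ ρ := by
      refine le_trans ?_ hρn1
      apply Real.cos_le_cos_of_nonneg_of_le_pi (by positivity) hπn_le
      apply div_le_div_of_nonneg_left Real.pi_pos.le hnR
      exact_mod_cast Nat.le_succ n
    have hwpos : ∀ i, i ≤ n → 0 ≤ chebW ρ i := by
      intro i hi
      exact chebU_eval_nonneg (le_trans hn (Nat.le_succ n)) hρpos hρn1 i (by omega)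
    have hX : ContinuousOn (fun u => αv (π u)) (Icc 0 T) :=
      (LinearMap.continuous_of_finiteDimensional αv).comp_continuousOn hπ
    have hY : ContinuousOn (fun u => βv (π u)) (Icc 0 T) :=
      (LinearMap.continuous_of_finiteDimensional βv).comp_continuousOn hπ
    obtain ⟨CX, hCX⟩ := lb_of_continuousOn hX
    obtain ⟨CY, hCY⟩ := lb_of_continuousOn hY
    set X : ℝ → ℝ := fun u => αv (π u) with hXdef
    set Y : ℝ → ℝ := fun u => βv (π u) with hYdef
    rw [show altComp (pitman α αv) (pitman β βv) (n+1) π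
        = altComp (pitman α αv) (pitman β βv) n
            ((if Even n then pitman α αv else pitman β βv) π) from by
      rw [altComp_succ_right]; rfl]
    rcases Nat.even_or_odd n with he | ho
    · -- η = pitman α αv π
      rw [if_pos he]
      obtain ⟨k, hk⟩ := he
      have hk' : n = 2*k := by omega
      have hkpos : 1 ≤ k := by omega
      set η : ℝ → V := pitman α αv π with hηdef
      have hηeq : η = fun u => π u - rinf X u • α := rfl
      have hI0 : rinf X 0 = 0 := by
        rw [rinf, Set.Icc_self, Set.image_singleton]
        have : X 0 = 0 := by simp [hXdef, hπ0]
        rw [this]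
        exact csInf_singleton 0
      have hη0 : η 0 = 0 := by rw [hηeq]; simp [hI0, hπ0]
      have hIcont := rinf_continuousOn hT.le hX
      have hηcont : ContinuousOn η (Icc 0 T) := by
        rw [hηeq]; exact hπ.sub (hIcont.smul continuousOn_const)
      have hXη : (fun u => αv (η u)) = fun u => X u - 2 * rinf X u := by
        funext u
        rw [hηeq]
        simp only [map_sub, map_smul, smul_eq_mul, hα, hXdef]
        ring
      have hYη : (fun u => βv (η u)) = fun u => Y u + 2*ρ*rinf X u := by
        funext u
        rw [hηeq]
        simp only [map_sub, map_smul, smul_eq_mul, hβα, hYdef]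
        ring
      have hIH := IH hρn η hηcont hη0 t ht
      rw [hXη, hYη] at hIH
      rw [hIH]
      have hT3 : chInf (altF (chebW ρ) X Y) (n+1) t
          = chebW ρ 0 * rinf X t
            + chInf (altF (chebW ρ) (fun u => X u - 2 * rinf X u)
                (fun u => Y u + 2*ρ*rinf X u)) n t := by
        have h := mainB (X := Y) (Y := X) hρpos.le hT.le hX hCY hCX k (chebW ρ)
          (fun i hi => hwpos i (by omega)) (fun i _ => chebW_rec ρ i) ht.1 ht.2
        rw [show 2*k+1 = n+1 from by omega, show 2*k = n from by omega] at h
        exact h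
      have hT4 : chInf (altF (chebW ρ) Y X) n t
          = chInf (altF (chebW ρ) (fun u => Y u + 2*ρ*rinf X u)
              (fun u => X u - 2 * rinf X u)) (n-1) t := by
        have h := mainA (X := Y) (Y := X) hρpos.le hT.le hX hCY hCX (k-1) (chebW ρ)
          (fun i hi => hwpos i (by omega)) (fun i _ => chebW_rec ρ i)
          (by rw [chebW_one, chebW_zero]; ring) ht.1 ht.2
        rw [show 2*(k-1)+2 = n from by omega, show 2*(k-1)+1 = n-1 from by omega] at h
        exact h
      rw [show (n+1)-1 = n from by omega, hT3, hT4, chebW_zero, hηeq]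
      rw [one_mul, add_smul]
      beta_reduce
      abel
    · -- η = pitman β βv π
      rw [if_neg (Nat.not_even_iff_odd.2 ho)]
      obtain ⟨k, hk⟩ := ho
      set η : ℝ → V := pitman β βv π with hηdef
      have hηeq : η = fun u => π u - rinf Y u • β := rfl
      have hJ0 : rinf Y 0 = 0 := by
        rw [rinf, Set.Icc_self, Set.image_singleton]
        have : Y 0 = 0 := by simp [hYdef, hπ0]
        rw [this]
        exact csInf_singleton 0
      have hη0 : η 0 = 0 := by rw [hηeq]; simp [hJ0, hπ0]
      have hJcont := rinf_continuousOn hT.le hY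
      have hηcont : ContinuousOn η (Icc 0 T) := by
        rw [hηeq]; exact hπ.sub (hJcont.smul continuousOn_const)
      have hXη : (fun u => αv (η u)) = fun u => X u + 2*ρ*rinf Y u := by
        funext u
        rw [hηeq]
        simp only [map_sub, map_smul, smul_eq_mul, hαβ, hXdef]
        ring
      have hYη : (fun u => βv (η u)) = fun u => Y u - 2 * rinf Y u := by
        funext u
        rw [hηeq]
        simp only [map_sub, map_smul, smul_eq_mul, hβ, hYdef]
        ring
      have hIH := IH hρn η hηcont hη0 t ht
      rw [hXη, hYη] at hIH
      rw [hIH]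
      have hT1 : chInf (altF (chebW ρ) X Y) (n+1) t
          = chInf (altF (chebW ρ) (fun u => X u + 2*ρ*rinf Y u)
              (fun u => Y u - 2 * rinf Y u)) n t := by
        have h := mainA (X := X) (Y := Y) hρpos.le hT.le hY hCX hCY k (chebW ρ)
          (fun i hi => hwpos i (by omega)) (fun i _ => chebW_rec ρ i)
          (by rw [chebW_one, chebW_zero]; ring) ht.1 ht.2
        rw [show 2*k+2 = n+1 from by omega, show 2*k+1 = n from by omega] at h
        exact h
      have hT2 : chInf (altF (chebW ρ) Y X) n t
          = chebW ρ 0 * rinf Y t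
            + chInf (altF (chebW ρ) (fun u => Y u - 2 * rinf Y u)
                (fun u => X u + 2*ρ*rinf Y u)) (n-1) t := by
        have h := mainB (X := X) (Y := Y) hρpos.le hT.le hY hCX hCY k (chebW ρ)
          (fun i hi => hwpos i (by omega)) (fun i _ => chebW_rec ρ i) ht.1 ht.2
        rw [show 2*k+1 = n from by omega, show 2*k = n-1 from by omega] at h
        exact h
      rw [show (n+1)-1 = n from by omega, hT1, hT2, chebW_zero, hηeq]
      rw [one_mul, add_smul]
      beta_reduce
      abel

end Assembly

end PitmanBBO

/-- Theorem 2.4 of Biane–Bougerol–O'Connell: a Chebyshev-polynomial formula for the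
alternating composition `P_α P_β P_α ⋯` (`n` factors).  Here `U k` is the `k`-th
Chebyshev polynomial of the second kind (denoted `T_k` in the paper), and
`Z⁽ᵏ⁾ = α∨∘π` for `k` even, `β∨∘π` for `k` odd. -/
theorem pitman_chebyshev_formula
    {V : Type*} [NormedAddCommGroup V] [NormedSpace ℝ V] [FiniteDimensional ℝ V]
    (T : ℝ) (hT : 0 < T) (α β : V) (αv βv : Module.Dual ℝ V)
    (hα : αv α = 2) (hβ : βv β = 2)
    (ρ : ℝ) (hρpos : 0 < ρ)
    (hαβ : αv β = -(2 * ρ)) (hβα : βv α = -(2 * ρ))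
    (n : ℕ) (hn : 1 ≤ n) (hρ : Real.cos (Real.pi / n) ≤ ρ)
    (π : ℝ → V) (hcont : ContinuousOn π (Set.Icc 0 T)) (h0 : π 0 = 0) :
    ∀ t ∈ Set.Icc 0 T,
      altComp (pitman α αv) (pitman β βv) n π t
        = π t
          - sInf {y : ℝ | ∃ s : Fin n → ℝ, Antitone s ∧ (∀ i, s i ∈ Set.Icc 0 t) ∧
              y = ∑ i : Fin n, (Polynomial.Chebyshev.U ℝ (i : ℤ)).eval ρ *
                    (if Even (i : ℕ) then αv (π (s i)) else βv (π (s i)))} • α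
          - sInf {y : ℝ | ∃ s : Fin (n - 1) → ℝ, Antitone s ∧ (∀ i, s i ∈ Set.Icc 0 t) ∧
              y = ∑ i : Fin (n - 1), (Polynomial.Chebyshev.U ℝ (i : ℤ)).eval ρ *
                    (if Even ((i : ℕ) + 1) then αv (π (s i)) else βv (π (s i)))} • β := by
  intro t ht
  have key := PitmanBBO.aux_formula hT hα hβ hρpos hαβ hβα n hn hρ π hcont h0 t ht
  rw [key]
  have e1 : {y : ℝ | ∃ s : Fin n → ℝ, Antitone s ∧ (∀ i, s i ∈ Set.Icc 0 t) ∧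
        y = ∑ i : Fin n, (Polynomial.Chebyshev.U ℝ (i : ℤ)).eval ρ *
              (if Even (i : ℕ) then αv (π (s i)) else βv (π (s i)))}
      = PitmanBBO.chSet (PitmanBBO.altF (PitmanBBO.chebW ρ)
          (fun u => αv (π u)) (fun u => βv (π u))) n t := by
    ext y
    constructor <;> rintro ⟨s, h1, h2, h3⟩ <;> refine ⟨s, h1, h2, ?_⟩ <;> rw [h3] <;>
      refine Finset.sum_congr rfl (fun i _ => ?_) <;>
      simp [PitmanBBO.altF, PitmanBBO.chebW]
  have e2 : {y : ℝ | ∃ s : Fin (n-1) → ℝ, Antitone s ∧ (∀ i, s i ∈ Set.Icc 0 t) ∧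
        y = ∑ i : Fin (n-1), (Polynomial.Chebyshev.U ℝ (i : ℤ)).eval ρ *
              (if Even ((i : ℕ) + 1) then αv (π (s i)) else βv (π (s i)))}
      = PitmanBBO.chSet (PitmanBBO.altF (PitmanBBO.chebW ρ)
          (fun u => βv (π u)) (fun u => αv (π u))) (n-1) t := by
    ext y
    constructor <;> rintro ⟨s, h1, h2, h3⟩ <;> refine ⟨s, h1, h2, ?_⟩ <;> rw [h3] <;>
      refine Finset.sum_congr rfl (fun i _ => ?_) <;>
      · rcases Nat.even_or_odd (i : ℕ) with hp | hp
        · simp [PitmanBBO.altF, PitmanBBO.chebW, hp, Nat.even_add_one]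
        · simp [PitmanBBO.altF, PitmanBBO.chebW, Nat.not_even_iff_odd.2 hp,
            Nat.even_add_one]
  rw [show sInf {y : ℝ | ∃ s : Fin n → ℝ, Antitone s ∧ (∀ i, s i ∈ Set.Icc 0 t) ∧
        y = ∑ i : Fin n, (Polynomial.Chebyshev.U ℝ (i : ℤ)).eval ρ *
              (if Even (i : ℕ) then αv (π (s i)) else βv (π (s i)))}
      = PitmanBBO.chInf (PitmanBBO.altF (PitmanBBO.chebW ρ)
          (fun u => αv (π u)) (fun u => βv (π u))) n t from congrArg sInf e1]
  rw [show sInf {y : ℝ | ∃ s : Fin (n-1) → ℝ, Antitone s ∧ (∀ i, s i ∈ Set.Icc 0 t) ∧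
        y = ∑ i : Fin (n-1), (Polynomial.Chebyshev.U ℝ (i : ℤ)).eval ρ *
              (if Even ((i : ℕ) + 1) then αv (π (s i)) else βv (π (s i)))}
      = PitmanBBO.chInf (PitmanBBO.altF (PitmanBBO.chebW ρ)
          (fun u => βv (π u)) (fun u => αv (π u))) (n-1) t from congrArg sInf e2]
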